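/- Let p be a prime. If a positive rational q can be written as φ(m₀²)/φ(n₀²) with m₀n₀ having no prime factor ≥ p, then for any integer a, the rational q·p^{2a} can be written as φ(m²)/φ(n²) with mn having no prime factor > p. -/

import Mathlib

theorem stmt5 (p : ℕ) (hp : p.Prime) (q : ℚ) (hq : 0 < q)
    (m₀ n₀ : ℕ) (hm₀ : 0 < m₀) (hn₀ : 0 < n₀)
    (hfac : ∀ r : ℕ, r.Prime → r ∣ m₀ * n₀ → r < p)
    (hrep : q = (Nat.totient (m₀ ^ 2) : ℚ) / (Nat.totient (n₀ ^ 2) : ℚ))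
    (a : ℤ) :
    ∃ m n : ℕ, 0 < m ∧ 0 < n ∧
      q * (p : ℚ) ^ (2 * a) =
        (Nat.totient (m ^ 2) : ℚ) / (Nat.totient (n ^ 2) : ℚ) ∧
      ∀ r : ℕ, r.Prime → r ∣ m * n → r ≤ p := by
  have hpm : ¬ p ∣ m₀ := fun h => absurd (hfac p hp (h.mul_right n₀)) (lt_irrefl p)
  have hpn : ¬ p ∣ n₀ := fun h => absurd (hfac p hp (h.mul_left m₀)) (lt_irrefl p)
  set k : ℕ := 1 + a.natAbs with hk
  have hek : (0:ℤ) ≤ (k:ℤ) + a := by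
    omega
  set e : ℕ := ((k:ℤ) + a).toNat with hedef
  have he : (e:ℤ) = (k:ℤ) + a := Int.toNat_of_nonneg hek
  have hkpos : 1 ≤ k := by omega
  have hepos : 1 ≤ e := by omega
  have hppos : 0 < p := hp.pos
  refine ⟨m₀ * p ^ e, n₀ * p ^ k, by positivity, by positivity, ?_, ?_⟩
  · have hcopm : Nat.Coprime (m₀ ^ 2) (p ^ (2 * e)) :=
      ((hp.coprime_iff_not_dvd.mpr hpm).symm).pow _ _
    have hcopn : Nat.Coprime (n₀ ^ 2) (p ^ (2 * k)) :=
      ((hp.coprime_iff_not_dvd.mpr hpn).symm).pow _ _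
    have htm : ((m₀ * p ^ e) ^ 2).totient
        = (m₀ ^ 2).totient * (p ^ (2 * e - 1) * (p - 1)) := by
      rw [mul_pow, ← pow_mul, mul_comm e 2, Nat.totient_mul hcopm,
        Nat.totient_prime_pow hp (by omega)]
    have htn : ((n₀ * p ^ k) ^ 2).totient
        = (n₀ ^ 2).totient * (p ^ (2 * k - 1) * (p - 1)) := by
      rw [mul_pow, ← pow_mul, mul_comm k 2, Nat.totient_mul hcopn,
        Nat.totient_prime_pow hp (by omega)]
    rw [htm, htn, hrep]
    have hA : (0:ℚ) < ((m₀ ^ 2).totient : ℚ) := by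
      exact_mod_cast Nat.totient_pos.mpr (by positivity)
    have hB : (0:ℚ) < ((n₀ ^ 2).totient : ℚ) := by
      exact_mod_cast Nat.totient_pos.mpr (by positivity)
    have hpQ : (0:ℚ) < (p:ℚ) := by exact_mod_cast hppos
    have hp1 : (0:ℚ) < (p:ℚ) - 1 := by
      have := hp.two_le; rw [sub_pos]; exact_mod_cast this.trans_lt' one_lt_two
    have key : (p:ℚ) ^ (2 * a) = (p:ℚ) ^ (2 * e - 1 : ℕ) / (p:ℚ) ^ (2 * k - 1 : ℕ) := by
      rw [eq_div_iff (by positivity), ← zpow_natCast (p:ℚ) (2*e-1),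
        ← zpow_natCast (p:ℚ) (2*k-1), ← zpow_add₀ (ne_of_gt hpQ)]
      congr 1
      have h1 : ((2 * e - 1 : ℕ) : ℤ) = 2 * (e:ℤ) - 1 := by omega
      have h2 : ((2 * k - 1 : ℕ) : ℤ) = 2 * (k:ℤ) - 1 := by omega
      rw [h1, h2]; omega
    rw [key]
    push_cast
    have hp1' : ((p - 1 : ℕ) : ℚ) ≠ 0 := by exact_mod_cast (Nat.sub_pos_of_lt hp.one_lt).ne'
    field_simp
  · intro r hr hdvd
    rcases (Nat.Prime.dvd_mul hr).mp hdvd with h | h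
    · rcases (Nat.Prime.dvd_mul hr).mp h with h' | h'
      · exact le_of_lt (hfac r hr (h'.mul_right n₀))
      · exact le_of_eq (Nat.prime_dvd_prime_iff_eq hr hp |>.mp (hr.dvd_of_dvd_pow h'))
    · rcases (Nat.Prime.dvd_mul hr).mp h with h' | h'
      · exact le_of_lt (hfac r hr (h'.mul_left m₀))
      · exact le_of_eq (Nat.prime_dvd_prime_iff_eq hr hp |>.mp (hr.dvd_of_dvd_pow h'))
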